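/- Let T be a regular triangulation of a two-dimensional polygonal domain with regularity parameter θ ≥ θ_0. For each edge σ set d_σ = h_σ·ξ_K/(12·h_K) where K is a chosen cell adjacent to σ. Then for any two points x, y ∈ R^2, Σ_{σ∈E} χ_σ(x,y)·d_σ ≤ c(θ_0)·(|y−x| + h), where χ_σ(x,y) = 1 if the segment [x,y] intersects σ and 0 otherwise, and h = max_K h_K (assuming additionally max_K (h/h_K) bounded). -/

import Mathlib

open MeasureTheory Set

noncomputable section

/-- Euclidean space `ℝ^d`. -/
abbrev Euc (d : ℕ) := EuclideanSpace ℝ (Fin d)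

/-- The (closed) simplex with vertices `p 0, …, p d`. -/
def cellSet {d : ℕ} (p : Fin (d + 1) → Euc d) : Set (Euc d) :=
  convexHull ℝ (Set.range p)

/-- The face of the simplex with vertices `p` opposite to the vertex `p i`. -/
def faceSet {d : ℕ} (p : Fin (d + 1) → Euc d) (i : Fin (d + 1)) : Set (Euc d) :=
  convexHull ℝ (p '' ({i}ᶜ : Set (Fin (d + 1))))

/-- The affine function `x ↦ ⟪g, x⟫ + b` on `ℝ^d`. -/
def affFn {d : ℕ} (g : Euc d) (b : ℝ) : Euc d → ℝ := fun x => (inner ℝ g x : ℝ) + b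

/-- A conforming simplicial mesh of a polygonal/polyhedral domain `Ω ⊂ ℝ^d`:
a finite family of nondegenerate simplices with pairwise disjoint interiors covering
`closure Ω`, such that two distinct cells meet in the empty set, a common vertex, or a
common face. -/
structure Mesh (d : ℕ) (Ω : Set (Euc d)) where
  cells : Finset (Fin (d + 1) → Euc d)
  indep : ∀ p ∈ cells, AffineIndependent ℝ p
  cover : closure Ω = ⋃ p ∈ cells, cellSet p
  disjoint_interiors : ∀ p ∈ cells, ∀ q ∈ cells, p ≠ q →
    interior (cellSet p) ∩ interior (cellSet q) = ∅
  conforming : ∀ p ∈ cells, ∀ q ∈ cells, p ≠ q →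
    cellSet p ∩ cellSet q = ∅ ∨ (∃ x, cellSet p ∩ cellSet q = {x}) ∨
      ∃ i j, faceSet p i = faceSet q j ∧ cellSet p ∩ cellSet q = faceSet p i

/-- The set of all faces (edges if `d = 2`) of the mesh. -/
def Mesh.faces {d : ℕ} {Ω : Set (Euc d)} (M : Mesh d Ω) : Finset (Set (Euc d)) :=
  letI : DecidableEq (Set (Euc d)) := Classical.decEq _
  (M.cells ×ˢ (Finset.univ : Finset (Fin (d + 1)))).image fun pi => faceSet pi.1 pi.2

/-- A face is internal when it is a common face of two distinct cells. -/
def Mesh.InternalFace {d : ℕ} {Ω : Set (Euc d)} (M : Mesh d Ω) (σ : Set (Euc d)) : Prop :=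
  ∃ p ∈ M.cells, ∃ q ∈ M.cells, p ≠ q ∧
    (∃ i, σ = faceSet p i) ∧ ∃ j, σ = faceSet q j

/-- Mesh regularity `θ ≥ θ₀`: every cell contains a ball of diameter `θ₀ · h_K`, and the
diameters of two cells sharing a face are comparable with ratio at least `θ₀`. -/
def Mesh.Regular {d : ℕ} {Ω : Set (Euc d)} (M : Mesh d Ω) (θ0 : ℝ) : Prop :=
  (∀ p ∈ M.cells, ∃ x : Euc d,
      Metric.ball x (θ0 * Metric.diam (cellSet p) / 2) ⊆ cellSet p) ∧
  ∀ p ∈ M.cells, ∀ q ∈ M.cells, (∃ i j, faceSet p i = faceSet q j) →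
    θ0 * Metric.diam (cellSet p) ≤ Metric.diam (cellSet q)

/-- Mean-value continuity across internal faces of the piecewise affine function with
pieces `affFn (g p) (b p)` (Crouzeix–Raviart condition). -/
def Mesh.CRContinuous {d : ℕ} {Ω : Set (Euc d)} (M : Mesh d Ω)
    (g : (Fin (d + 1) → Euc d) → Euc d) (b : (Fin (d + 1) → Euc d) → ℝ) : Prop :=
  ∀ p ∈ M.cells, ∀ q ∈ M.cells, ∀ i j, faceSet p i = faceSet q j →
    ∫ x in faceSet p i, affFn (g p) (b p) x ∂μH[(d : ℝ) - 1] =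
      ∫ x in faceSet p i, affFn (g q) (b q) x ∂μH[(d : ℝ) - 1]

/-- Zero mean value on boundary (non-internal) faces (Crouzeix–Raviart boundary
condition). -/
def Mesh.CRBoundary {d : ℕ} {Ω : Set (Euc d)} (M : Mesh d Ω)
    (g : (Fin (d + 1) → Euc d) → Euc d) (b : (Fin (d + 1) → Euc d) → ℝ) : Prop :=
  ∀ p ∈ M.cells, ∀ i, ¬ M.InternalFace (faceSet p i) →
    ∫ x in faceSet p i, affFn (g p) (b p) x ∂μH[(d : ℝ) - 1] = 0

/-- Square of the broken `H¹` seminorm of the piecewise affine function with cellwise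
gradients `g p`. -/
def Mesh.brokenSq {d : ℕ} {Ω : Set (Euc d)} (M : Mesh d Ω)
    (g : (Fin (d + 1) → Euc d) → Euc d) : ℝ :=
  ∑ p ∈ M.cells, (volume (cellSet p)).toReal * ‖g p‖ ^ 2

end

lemma faceSet_subset_cellSet {d : ℕ} (p : Fin (d + 1) → Euc d) (i : Fin (d + 1)) :
    faceSet p i ⊆ cellSet p :=
  convexHull_mono (Set.image_subset_range _ _)

lemma cellSet_bounded {d : ℕ} (p : Fin (d + 1) → Euc d) :
    Bornology.IsBounded (cellSet p) :=
  ((Set.finite_range p).isCompact_convexHull ℝ).isBounded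

lemma le_diam_of_ball_subset {s : Set (Euc 2)} (hs : Bornology.IsBounded s)
    {x : Euc 2} {r : ℝ} (hr : 0 < r) (hsub : Metric.ball x (r / 2) ⊆ s) :
    r ≤ Metric.diam s := by
  set e : Euc 2 := EuclideanSpace.single (0 : Fin 2) (1 : ℝ) with he
  have hne : ‖e‖ = 1 := by simp [he]
  refine le_of_forall_pos_le_add (fun ε hε => ?_)
  obtain ⟨δ, hδ0, hδε, hδr⟩ : ∃ δ : ℝ, 0 < δ ∧ δ ≤ ε / 2 ∧ δ ≤ r / 4 :=
    ⟨min (ε / 2) (r / 4), lt_min (by linarith) (by linarith),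
      min_le_left _ _, min_le_right _ _⟩
  have hmem : ∀ s' : ℝ, |s'| ≤ r / 2 - δ → x + s' • e ∈ s := by
    intro s' hs'
    apply hsub
    rw [Metric.mem_ball, dist_eq_norm]
    have : x + s' • e - x = s' • e := by abel
    rw [this, norm_smul, hne, mul_one, Real.norm_eq_abs]
    linarith
  have h1 : x + (r / 2 - δ) • e ∈ s := hmem _ (by rw [abs_of_pos (by linarith)])
  have h2 : x + (-(r / 2 - δ)) • e ∈ s := hmem _ (by rw [abs_neg, abs_of_pos (by linarith)])
  have hd : dist (x + (r / 2 - δ) • e) (x + (-(r / 2 - δ)) • e) = 2 * (r / 2 - δ) := by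
    rw [dist_eq_norm]
    have : x + (r / 2 - δ) • e - (x + (-(r / 2 - δ)) • e) = (2 * (r / 2 - δ)) • e := by
      module
    rw [this, norm_smul, hne, mul_one, Real.norm_eq_abs, abs_of_pos (by linarith)]
  have := Metric.dist_le_diam_of_mem hs h1 h2
  rw [hd] at this
  linarith

lemma seg_near {x y : Euc 2} {h : ℝ} (hpos : 0 < h) {z : Euc 2}
    (hz : z ∈ segment ℝ x y) :
    ∃ k ∈ Finset.range (⌈dist x y / h⌉₊ + 1),
      dist z (x + ((k : ℝ) * h / dist x y) • (y - x)) ≤ h := by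
  obtain ⟨a, b, ha, hb, hab, rfl⟩ := hz
  set L := dist x y with hL
  have hb1 : b ≤ 1 := by linarith
  have hL0 : 0 ≤ L := dist_nonneg
  have key : ∀ c : ℝ, a • x + b • y - (x + c • (y - x)) = (b - c) • (y - x) := by
    intro c
    have : a = 1 - b := by linarith
    rw [this]; module
  rcases eq_or_lt_of_le hL0 with hL0' | hLpos
  · refine ⟨0, by simp, ?_⟩
    have hxy : y = x := by
      have : dist x y = 0 := hL0'.symm
      rw [dist_eq_zero] at this; exact this.symm
    rw [dist_eq_norm, key, hxy]
    simp [hpos.le]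
  · refine ⟨⌊b * L / h⌋₊, ?_, ?_⟩
    · rw [Finset.mem_range, Nat.lt_add_one_iff]
      exact le_trans
        (Nat.floor_le_floor ((div_le_div_iff_of_pos_right hpos).mpr (by nlinarith)))
        (Nat.floor_le_ceil _)
    · set k := ⌊b * L / h⌋₊ with hk
      have h1 : (k : ℝ) ≤ b * L / h := Nat.floor_le (by positivity)
      have h2 : b * L / h < k + 1 := Nat.lt_floor_add_one _
      have h3 : (k : ℝ) * h ≤ b * L := (le_div_iff₀ hpos).mp h1
      have h4 : b * L < ((k : ℝ) + 1) * h := by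
        rw [← div_lt_iff₀ hpos]; linarith
      have hyx : ‖y - x‖ = L := by rw [hL, dist_comm, dist_eq_norm]
      rw [dist_eq_norm, key, norm_smul, Real.norm_eq_abs, hyx]
      have heq : |b - (k : ℝ) * h / L| * L = |b * L - (k : ℝ) * h| := by
        rw [← abs_of_pos hLpos, ← abs_mul, abs_of_pos hLpos, sub_mul,
          div_mul_cancel₀ _ (ne_of_gt hLpos)]
      rw [heq, abs_of_nonneg (by linarith)]
      nlinarith

open scoped Classical in
/-- Covering lemma: for a regular quasi-uniform 2D triangulation, with
`d_σ = h_σ ξ_K/(12 h_K)` for a chosen cell `K` adjacent to `σ`, and any two points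
`x, y ∈ ℝ²`, `Σ_σ χ_σ(x,y) d_σ ≤ c(θ₀,γ) (|y − x| + h)`. -/
theorem edge_covering_lemma (θ0 γ : ℝ) (hθ0 : 0 < θ0) (hγ : 0 < γ) :
    ∃ c : ℝ, 0 < c ∧
      ∀ (Ω : Set (Euc 2)) (M : Mesh 2 Ω), M.Regular θ0 →
        ∀ h : ℝ, 0 ≤ h → (∀ p ∈ M.cells, Metric.diam (cellSet p) ≤ h) →
          (∀ p ∈ M.cells, h ≤ γ * Metric.diam (cellSet p)) →
        ∀ ξ : (Fin 3 → Euc 2) → ℝ,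
          (∀ p ∈ M.cells, 0 < ξ p ∧
            ∃ x : Euc 2, Metric.ball x (ξ p / 2) ⊆ cellSet p) →
        ∀ D : Set (Euc 2) → ℝ,
          (∀ σ ∈ M.faces, ∃ p ∈ M.cells, (∃ i, σ = faceSet p i) ∧
            D σ = Metric.diam σ * ξ p / (12 * Metric.diam (cellSet p))) →
        ∀ x y : Euc 2,
          ∑ σ ∈ M.faces, (if (segment ℝ x y ∩ σ).Nonempty then D σ else 0) ≤
            c * (dist x y + h) := by
  refine ⟨18 * γ ^ 2 / θ0 ^ 2 + 1, by positivity, ?_⟩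
  intro Ω M hreg h hh hdiam hquasi ξ hξ D hD x y
  classical
  set L := dist x y with hLdef
  have hL0 : 0 ≤ L := dist_nonneg
  -- choose the cell attached to each face
  choose! P hPmem hPface hPval using hD
  choose! I hI using hPface
  -- the regularity ball centers
  choose! C hC using hreg.1
  -- touched faces
  set F : Finset (Set (Euc 2)) :=
    M.faces.filter (fun σ => (segment ℝ x y ∩ σ).Nonempty) with hF
  have hsum : ∑ σ ∈ M.faces, (if (segment ℝ x y ∩ σ).Nonempty then D σ else 0) =
      ∑ σ ∈ F, D σ := (Finset.sum_filter _ _).symm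
  rw [hsum]
  -- basic facts about touched faces
  have hFfaces : ∀ σ ∈ F, σ ∈ M.faces := fun σ hσ => (Finset.mem_filter.mp hσ).1
  have hFseg : ∀ σ ∈ F, (segment ℝ x y ∩ σ).Nonempty :=
    fun σ hσ => (Finset.mem_filter.mp hσ).2
  -- per-face bound: D σ ≤ h / 12
  have hDb : ∀ σ ∈ F, D σ ≤ h / 12 := by
    intro σ hσ
    have hσf := hFfaces σ hσ
    have hp : P σ ∈ M.cells := hPmem σ hσf
    have hface : σ = faceSet (P σ) (I σ) := hI σ hσf
    have hsub : σ ⊆ cellSet (P σ) := fun z hz => faceSet_subset_cellSet _ _ (hface ▸ hz)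
    have hbd := cellSet_bounded (P σ)
    have hdσ : Metric.diam σ ≤ Metric.diam (cellSet (P σ)) := Metric.diam_mono hsub hbd
    have hdc : Metric.diam (cellSet (P σ)) ≤ h := hdiam _ hp
    rw [hPval σ hσf]
    rcases eq_or_lt_of_le hh with hh0 | hpos
    · have : Metric.diam σ = 0 :=
        le_antisymm (hdσ.trans (hdc.trans hh0.symm.le)) Metric.diam_nonneg
      rw [this, zero_mul, zero_div, ← hh0]
      norm_num
    · have hdc0 : 0 < Metric.diam (cellSet (P σ)) := by
        have := hquasi _ hp
        nlinarith
      have hξp : ξ (P σ) ≤ Metric.diam (cellSet (P σ)) := by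
        obtain ⟨hξ0, cb, hcb⟩ := hξ _ hp
        exact le_diam_of_ball_subset hbd hξ0 hcb
      have hnum : Metric.diam σ * ξ (P σ) ≤ Metric.diam (cellSet (P σ)) * h :=
        mul_le_mul hdσ (hξp.trans hdc) (hξ _ hp).1.le hdc0.le
      calc Metric.diam σ * ξ (P σ) / (12 * Metric.diam (cellSet (P σ)))
          ≤ Metric.diam (cellSet (P σ)) * h / (12 * Metric.diam (cellSet (P σ))) := by
            exact (div_le_div_iff_of_pos_right (by positivity)).mpr hnum
        _ = h / 12 := by field_simp
  -- split on h = 0 or h > 0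
  rcases eq_or_lt_of_le hh with hh0 | hpos
  · -- degenerate case h = 0
    have hS : ∑ σ ∈ F, D σ ≤ 0 := by
      refine Finset.sum_nonpos (fun σ hσ => ?_)
      have := hDb σ hσ
      rw [← hh0] at this
      linarith
    have : (0:ℝ) ≤ (18 * γ ^ 2 / θ0 ^ 2 + 1) * (L + h) := by positivity
    linarith
  -- main case h > 0
  set n : ℕ := ⌈L / h⌉₊ with hn
  set pts : ℕ → Euc 2 := fun k => x + ((k : ℝ) * h / L) • (y - x) with hpts
  set T : Finset (Fin (2 + 1) → Euc 2) := F.image P with hT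
  have hTcells : ∀ p ∈ T, p ∈ M.cells := by
    intro p hp
    obtain ⟨σ, hσ, rfl⟩ := Finset.mem_image.mp hp
    exact hPmem σ (hFfaces σ hσ)
  -- cardinality comparison between F and T
  have hcardF : (F.card : ℝ) ≤ 3 * T.card := by
    have hle : F.card ≤ (T ×ˢ (Finset.univ : Finset (Fin (2 + 1)))).card := by
      apply Finset.card_le_card_of_injOn (fun σ => (P σ, I σ))
      · intro σ hσ
        exact Finset.mem_product.mpr ⟨Finset.mem_image_of_mem _ hσ, Finset.mem_univ _⟩
      · intro σ hσ τ hτ heq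
        have h1 := hI σ (hFfaces σ hσ)
        have h2 := hI τ (hFfaces τ hτ)
        rw [Prod.mk.injEq] at heq
        rw [h1, h2, heq.1, heq.2]
    rw [Finset.card_product, Finset.card_univ, Fintype.card_fin] at hle
    calc (F.card : ℝ) ≤ ((T.card * 3 : ℕ) : ℝ) := by exact_mod_cast hle
      _ = 3 * T.card := by push_cast; ring
  -- the small balls
  set r : ℝ := θ0 * h / (2 * γ) with hr
  have hr0 : 0 < r := by rw [hr]; positivity
  have hball : ∀ p ∈ T, Metric.ball (C p) r ⊆ cellSet p := by
    intro p hp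
    have hpc := hTcells p hp
    refine subset_trans (Metric.ball_subset_ball ?_) (hC p hpc)
    have hq := hquasi p hpc
    rw [hr, div_le_div_iff₀ (by positivity) (by norm_num)]
    nlinarith
  -- covering by balls along the segment
  have hcover : ∀ p ∈ T, cellSet p ⊆
      ⋃ k ∈ Finset.range (n + 1), Metric.ball (pts k) (3 * h) := by
    intro p hp w hw
    obtain ⟨σ, hσ, rfl⟩ := Finset.mem_image.mp hp
    obtain ⟨z, hzseg, hzσ⟩ := hFseg σ hσ
    obtain ⟨k, hk, hdist⟩ := seg_near hpos hzseg
    have hface := hI σ (hFfaces σ hσ)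
    have hz : z ∈ cellSet (P σ) := faceSet_subset_cellSet _ _ (hface ▸ hzσ)
    refine Set.mem_biUnion hk ?_
    rw [Metric.mem_ball]
    have h1 : dist w z ≤ h :=
      le_trans (Metric.dist_le_diam_of_mem (cellSet_bounded _) hw hz)
        (hdiam _ (hPmem σ (hFfaces σ hσ)))
    calc dist w (pts k) ≤ dist w z + dist z (pts k) := dist_triangle _ _ _
      _ ≤ h + h := add_le_add h1 hdist
      _ < 3 * h := by linarith
  -- disjointness of the small balls
  have hdisj : (↑T : Set (Fin (2 + 1) → Euc 2)).PairwiseDisjoint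
      (fun p => Metric.ball (C p) r) := by
    intro p hp q hq hpq
    have hp' : p ∈ T := hp
    have hq' : q ∈ T := hq
    have h1 : Metric.ball (C p) r ⊆ interior (cellSet p) :=
      (Metric.isOpen_ball).subset_interior_iff.mpr (hball p hp')
    have h2 : Metric.ball (C q) r ⊆ interior (cellSet q) :=
      (Metric.isOpen_ball).subset_interior_iff.mpr (hball q hq')
    have hint := M.disjoint_interiors p (hTcells p hp') q (hTcells q hq') hpq
    rw [Function.onFun, Set.disjoint_left]
    intro a hap haq
    have : a ∈ interior (cellSet p) ∩ interior (cellSet q) := ⟨h1 hap, h2 haq⟩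
    rw [hint] at this
    exact this
  -- the measure counting
  set V : ENNReal := volume (Metric.ball (0 : Euc 2) 1) with hV
  have hballvol : ∀ p : Fin (2 + 1) → Euc 2,
      volume (Metric.ball (C p) r) = ENNReal.ofReal (r ^ 2) * V := by
    intro p
    rw [hV, MeasureTheory.Measure.addHaar_ball volume (C p) hr0.le,
      finrank_euclideanSpace_fin]
  have hptsvol : ∀ k : ℕ,
      volume (Metric.ball (pts k) (3 * h)) = ENNReal.ofReal ((3 * h) ^ 2) * V := by
    intro k
    rw [hV, MeasureTheory.Measure.addHaar_ball volume (pts k) (by positivity),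
      finrank_euclideanSpace_fin]
  have hcount : (T.card : ENNReal) * ENNReal.ofReal (r ^ 2) * V ≤
      ((n + 1 : ℕ) : ENNReal) * ENNReal.ofReal ((3 * h) ^ 2) * V := by
    calc (T.card : ENNReal) * ENNReal.ofReal (r ^ 2) * V
        = ∑ p ∈ T, volume (Metric.ball (C p) r) := by
          rw [Finset.sum_congr rfl (fun p _ => hballvol p), Finset.sum_const,
            nsmul_eq_mul, mul_assoc]
      _ = volume (⋃ p ∈ T, Metric.ball (C p) r) :=
          (measure_biUnion_finset hdisj (fun _ _ => measurableSet_ball)).symm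
      _ ≤ volume (⋃ k ∈ Finset.range (n + 1), Metric.ball (pts k) (3 * h)) := by
          apply measure_mono
          exact Set.iUnion₂_subset (fun p hp => (hball p hp).trans (hcover p hp))
      _ ≤ ∑ k ∈ Finset.range (n + 1), volume (Metric.ball (pts k) (3 * h)) :=
          measure_biUnion_finset_le _ _
      _ = ((n + 1 : ℕ) : ENNReal) * ENNReal.ofReal ((3 * h) ^ 2) * V := by
          rw [Finset.sum_congr rfl (fun k _ => hptsvol k), Finset.sum_const,
            Finset.card_range, nsmul_eq_mul, mul_assoc]
  have hV0 : V ≠ 0 := (Metric.measure_ball_pos volume (0 : Euc 2) one_pos).ne'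
  have hVt : V ≠ ⊤ := measure_ball_lt_top.ne
  have hcount2 : (T.card : ENNReal) * ENNReal.ofReal (r ^ 2) ≤
      ((n + 1 : ℕ) : ENNReal) * ENNReal.ofReal ((3 * h) ^ 2) :=
    (ENNReal.mul_le_mul_iff_left hV0 hVt).mp hcount
  have hcardT : (T.card : ℝ) * r ^ 2 ≤ (((n : ℝ)) + 1) * (3 * h) ^ 2 := by
    have l1 : (T.card : ENNReal) * ENNReal.ofReal (r ^ 2) =
        ENNReal.ofReal ((T.card : ℝ) * r ^ 2) := by
      rw [ENNReal.ofReal_mul (Nat.cast_nonneg _), ENNReal.ofReal_natCast]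
    have l2 : ((n + 1 : ℕ) : ENNReal) * ENNReal.ofReal ((3 * h) ^ 2) =
        ENNReal.ofReal (((n + 1 : ℕ) : ℝ) * (3 * h) ^ 2) := by
      rw [ENNReal.ofReal_mul (Nat.cast_nonneg _), ENNReal.ofReal_natCast]
    rw [l1, l2] at hcount2
    have := (ENNReal.ofReal_le_ofReal_iff (by positivity)).mp hcount2
    push_cast at this
    linarith
  -- arithmetic conclusion
  have hn2 : ((n : ℝ) + 1) * h ≤ L + 2 * h := by
    have h1 : (n : ℝ) < L / h + 1 := Nat.ceil_lt_add_one (by positivity)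
    have h2 : ((n : ℝ) + 1) * h ≤ (L / h + 2) * h := by nlinarith
    have h3 : (L / h + 2) * h = L + 2 * h := by field_simp
    linarith
  have hsum1 : ∑ σ ∈ F, D σ ≤ (F.card : ℝ) * (h / 12) := by
    have := Finset.sum_le_card_nsmul F D (h / 12) hDb
    simpa [nsmul_eq_mul] using this
  have hrsq : r ^ 2 * (4 * γ ^ 2) = θ0 ^ 2 * h ^ 2 := by
    rw [hr]; field_simp; ring
  have step1 : (T.card : ℝ) * (θ0 ^ 2 * h ^ 2) ≤ ((n : ℝ) + 1) * 9 * h ^ 2 * (4 * γ ^ 2) := by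
    have m := mul_le_mul_of_nonneg_right hcardT (by positivity : (0:ℝ) ≤ 4 * γ ^ 2)
    calc (T.card : ℝ) * (θ0 ^ 2 * h ^ 2) = (T.card : ℝ) * r ^ 2 * (4 * γ ^ 2) := by
          rw [mul_assoc, ← hrsq]
      _ ≤ ((n : ℝ) + 1) * (3 * h) ^ 2 * (4 * γ ^ 2) := m
      _ = ((n : ℝ) + 1) * 9 * h ^ 2 * (4 * γ ^ 2) := by ring
  have step1' : (T.card : ℝ) * θ0 ^ 2 * h ≤ ((n : ℝ) + 1) * 36 * γ ^ 2 * h := by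
    rw [← mul_le_mul_iff_left₀ hpos]
    calc (T.card : ℝ) * θ0 ^ 2 * h * h = (T.card : ℝ) * (θ0 ^ 2 * h ^ 2) := by ring
      _ ≤ ((n : ℝ) + 1) * 9 * h ^ 2 * (4 * γ ^ 2) := step1
      _ = ((n : ℝ) + 1) * 36 * γ ^ 2 * h * h := by ring
  set c' : ℝ := 18 * γ ^ 2 / θ0 ^ 2 with hc'def
  have hθ2 : (0:ℝ) < θ0 ^ 2 := by positivity
  have hc'θ : c' * θ0 ^ 2 = 18 * γ ^ 2 := by rw [hc'def]; field_simp
  have hc'0 : (0:ℝ) ≤ c' := by rw [hc'def]; positivity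
  have step2 : (T.card : ℝ) * h * θ0 ^ 2 ≤ 36 * γ ^ 2 * (L + 2 * h) := by
    calc (T.card : ℝ) * h * θ0 ^ 2 = (T.card : ℝ) * θ0 ^ 2 * h := by ring
      _ ≤ ((n : ℝ) + 1) * 36 * γ ^ 2 * h := step1'
      _ = 36 * γ ^ 2 * (((n : ℝ) + 1) * h) := by ring
      _ ≤ 36 * γ ^ 2 * (L + 2 * h) :=
          mul_le_mul_of_nonneg_left hn2 (by positivity)
  have step3 : (T.card : ℝ) * h ≤ 2 * c' * (L + 2 * h) := by
    rw [← mul_le_mul_iff_left₀ hθ2]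
    calc (T.card : ℝ) * h * θ0 ^ 2 ≤ 36 * γ ^ 2 * (L + 2 * h) := step2
      _ = 2 * c' * (L + 2 * h) * θ0 ^ 2 := by linear_combination (2 * (L + 2 * h)) * hc'θ.symm
  calc ∑ σ ∈ F, D σ ≤ (F.card : ℝ) * (h / 12) := hsum1
    _ ≤ 3 * (T.card : ℝ) * (h / 12) := by
        have := mul_le_mul_of_nonneg_right hcardF (by positivity : (0:ℝ) ≤ h / 12)
        linarith
    _ = (T.card : ℝ) * h / 4 := by ring
    _ ≤ 2 * c' * (L + 2 * h) / 4 := by linarith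
    _ ≤ (c' + 1) * (L + h) := by nlinarith [mul_nonneg hc'0 hL0, mul_nonneg hc'0 hh]
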